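/- arXiv:1710.09453 — 3 statements merged into one kernel-verified Lean document; each statement's English description precedes it below -/
import Mathlib

section
/- Let Ω = (−1,1)² ∖ ((0,1)×{0}) ⊂ ℝ² be the slit square. There exists a function f : Ω → ℝ that is differentiable on Ω with ‖f‖_∞ ≤ 1 and sup_{x∈Ω} |∇f(x)| < ∞ (hence f ∈ W^{1,p}(Ω) for every 1 ≤ p < ∞), f ≡ 1 on (1/2,1)×(0,1) and f ≡ 0 on (1/2,1)×(−1,0), such that for every 1 ≤ p < ∞ and every s ∈ (0,1) with sp > 1, ∫_Ω ∫_Ω |f(x)−f(y)|^p / |x−y|^{2+sp} dy dx = ∞; i.e. f ∈ W^{1,p}(Ω) but f ∉ W^{s,p}(Ω) for s > 1/p. -/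
open MeasureTheory ENNReal

noncomputable section

/-- The slit square `Ω = (-1,1)² \ ((0,1) × {0}) ⊆ ℝ²`. -/
def slitSquare : Set (EuclideanSpace ℝ (Fin 2)) :=
  {x | x 0 ∈ Set.Ioo (-1 : ℝ) 1 ∧ x 1 ∈ Set.Ioo (-1 : ℝ) 1} \
    {x | x 0 ∈ Set.Ioo (0 : ℝ) 1 ∧ x 1 = 0}

namespace SlitSquareAux

open Set Filter

def phi : ℝ → ℝ := fun t => Real.smoothTransition (4 * t - 1)

def ff : EuclideanSpace ℝ (Fin 2) → ℝ := fun x => if 0 < x 1 then phi (x 0) else 0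

lemma phi_contDiff : ContDiff ℝ 1 phi :=
  Real.smoothTransition.contDiff.comp ((contDiff_const.mul contDiff_id).sub contDiff_const)

lemma phi_zero {t : ℝ} (ht : t ≤ 1/4) : phi t = 0 :=
  show Real.smoothTransition (4 * t - 1) = 0 from
    Real.smoothTransition.zero_of_nonpos (by linarith)

lemma phi_one {t : ℝ} (ht : 1/2 ≤ t) : phi t = 1 :=
  Real.smoothTransition.one_of_one_le (by linarith)

lemma continuous_eval (i : Fin 2) : Continuous fun x : EuclideanSpace ℝ (Fin 2) => x i :=
  (EuclideanSpace.proj (𝕜 := ℝ) i).continuous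

lemma ff_cases {x : EuclideanSpace ℝ (Fin 2)} (hx : x ∈ slitSquare) :
    ff =ᶠ[nhds x] (fun y => phi (y 0)) ∨ ff =ᶠ[nhds x] (fun _ => 0) := by
  rcases lt_trichotomy (x 1) 0 with h | h | h
  · right
    have ho : IsOpen {y : EuclideanSpace ℝ (Fin 2) | y 1 < 0} :=
      isOpen_lt (continuous_eval 1) continuous_const
    filter_upwards [ho.mem_nhds h] with y hy
    simp [ff, not_lt.2 (le_of_lt hy)]
  · right
    have hx0 : x 0 ≤ 0 := by
      rcases hx with ⟨⟨h0, _⟩, hns⟩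
      by_contra hc
      push_neg at hc
      exact hns ⟨⟨hc, h0.2⟩, h⟩
    have ho : IsOpen {y : EuclideanSpace ℝ (Fin 2) | y 0 < 1/4} :=
      isOpen_lt (continuous_eval 0) continuous_const
    filter_upwards [ho.mem_nhds (by simp only [Set.mem_setOf_eq]; linarith)] with y hy
    by_cases h1 : 0 < y 1
    · simp [ff, h1, phi_zero (le_of_lt hy)]
    · simp [ff, h1]
  · left
    have ho : IsOpen {y : EuclideanSpace ℝ (Fin 2) | 0 < y 1} :=
      isOpen_lt continuous_const (continuous_eval 1)
    filter_upwards [ho.mem_nhds h] with y hy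
    simp [ff, hy]

lemma g_diff (x : EuclideanSpace ℝ (Fin 2)) :
    DifferentiableAt ℝ (fun y : EuclideanSpace ℝ (Fin 2) => phi (y 0)) x :=
  (DifferentiableAt.comp (g := phi) x (phi_contDiff.differentiable one_ne_zero (x 0)))
    (EuclideanSpace.proj (𝕜 := ℝ) (0 : Fin 2)).differentiableAt

lemma ff_diff {x : EuclideanSpace ℝ (Fin 2)} (hx : x ∈ slitSquare) :
    DifferentiableAt ℝ ff x := by
  rcases ff_cases hx with h | h
  · exact (g_diff x).congr_of_eventuallyEq h
  · exact (differentiableAt_const (0:ℝ)).congr_of_eventuallyEq h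

lemma norm_proj_le : ‖EuclideanSpace.proj (𝕜 := ℝ) (0 : Fin 2)‖ ≤ 1 := by
  apply ContinuousLinearMap.opNorm_le_bound _ zero_le_one
  intro y
  rw [one_mul]
  have : ‖y 0‖ ^ 2 ≤ ‖y‖ ^ 2 := by
    rw [EuclideanSpace.norm_eq, Real.sq_sqrt (by positivity)]
    have : ‖y 0‖ ^ 2 ≤ ∑ i, ‖y i‖ ^ 2 :=
      Finset.single_le_sum (f := fun i => ‖y i‖^2) (fun i _ => by positivity) (Finset.mem_univ 0)
    simpa using this
  have h0 : (0:ℝ) ≤ ‖y‖ := norm_nonneg _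
  show ‖y 0‖ ≤ ‖y‖
  nlinarith [norm_nonneg (y 0)]

lemma ff_fderiv_bound : ∃ M : ℝ, ∀ x ∈ slitSquare, ‖fderiv ℝ ff x‖ ≤ M := by
  obtain ⟨M, hM⟩ := isCompact_Icc.exists_bound_of_continuousOn
    ((phi_contDiff.continuous_deriv le_rfl).continuousOn (s := Icc (-1:ℝ) 1))
  refine ⟨max M 0, fun x hx => ?_⟩
  rcases ff_cases hx with h | h
  · rw [h.fderiv_eq]
    have : (fun y : EuclideanSpace ℝ (Fin 2) => phi (y 0))
        = phi ∘ (EuclideanSpace.proj (𝕜 := ℝ) (0 : Fin 2)) := rfl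
    rw [this, fderiv_comp x (phi_contDiff.differentiable one_ne_zero _)
      (EuclideanSpace.proj (𝕜 := ℝ) (0 : Fin 2)).differentiableAt,
      (EuclideanSpace.proj (𝕜 := ℝ) (0 : Fin 2)).fderiv]
    calc ‖(fderiv ℝ phi (x 0)).comp (EuclideanSpace.proj (𝕜 := ℝ) (0 : Fin 2))‖
        ≤ ‖fderiv ℝ phi (x 0)‖ * ‖EuclideanSpace.proj (𝕜 := ℝ) (0 : Fin 2)‖ :=
          ContinuousLinearMap.opNorm_comp_le _ _
      _ ≤ M * 1 := by
          have hb : ‖fderiv ℝ phi (x 0)‖ ≤ M := by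
            rw [← norm_deriv_eq_norm_fderiv]
            exact hM (x 0) ⟨hx.1.1.1.le, hx.1.1.2.le⟩
          exact mul_le_mul hb norm_proj_le (norm_nonneg _)
            (le_trans (norm_nonneg _) hb)
      _ ≤ max M 0 := by simp [le_max_iff]
  · rw [h.fderiv_eq, fderiv_fun_const]
    simp

lemma measurableSet_pibox (a b c d : ℝ) :
    MeasurableSet (univ.pi ![Ioo a b, Ioo c d] : Set (Fin 2 → ℝ)) := by
  apply MeasurableSet.univ_pi
  intro i; fin_cases i <;> exact measurableSet_Ioo

lemma box_eq (a b c d : ℝ) :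
    {y : EuclideanSpace ℝ (Fin 2) | y 0 ∈ Ioo a b ∧ y 1 ∈ Ioo c d}
      = (MeasurableEquiv.toLp 2 (Fin 2 → ℝ)).symm ⁻¹' (univ.pi ![Ioo a b, Ioo c d]) := by
  ext y
  simp only [Set.mem_setOf_eq, Set.mem_preimage, Set.mem_pi, Set.mem_univ, forall_true_left]
  constructor
  · rintro ⟨h0, h1⟩ i
    fin_cases i <;> simpa using (by assumption)
  · intro h
    exact ⟨by simpa using h 0, by simpa using h 1⟩

lemma volume_box (a b c d : ℝ) :
    volume {y : EuclideanSpace ℝ (Fin 2) | y 0 ∈ Ioo a b ∧ y 1 ∈ Ioo c d}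
      = ENNReal.ofReal (b - a) * ENNReal.ofReal (d - c) := by
  rw [box_eq, (EuclideanSpace.volume_preserving_symm_measurableEquiv_toLp (Fin 2)).measure_preimage
      (measurableSet_pibox a b c d).nullMeasurableSet]
  rw [volume_pi_pi]
  simp [Fin.prod_univ_two, Real.volume_Ioo]

lemma measurableSet_box (a b c d : ℝ) :
    MeasurableSet {y : EuclideanSpace ℝ (Fin 2) | y 0 ∈ Ioo a b ∧ y 1 ∈ Ioo c d} := by
  rw [box_eq]
  exact (MeasurableEquiv.toLp 2 (Fin 2 → ℝ)).symm.measurable (measurableSet_pibox a b c d)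

lemma pibox_eq (a b c d : ℝ) :
    (univ.pi ![Ioo a b, Ioo c d] : Set (Fin 2 → ℝ))
      = MeasurableEquiv.finTwoArrow ⁻¹' (Ioo a b ×ˢ Ioo c d) := by
  ext z
  simp only [Set.mem_pi, Set.mem_univ, forall_true_left, Set.mem_preimage,
    MeasurableEquiv.finTwoArrow, Set.mem_prod]
  constructor
  · intro h
    exact ⟨by simpa using h 0, by simpa using h 1⟩
  · rintro ⟨h0, h1⟩ i
    fin_cases i <;> simpa using (by assumption)

lemma lintegral_box (a b c d : ℝ) (g : ℝ → ℝ≥0∞) (hg : Measurable g) :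
    ∫⁻ x in {y : EuclideanSpace ℝ (Fin 2) | y 0 ∈ Ioo a b ∧ y 1 ∈ Ioo c d}, g (x 1)
      = ENNReal.ofReal (b - a) * ∫⁻ t in Ioo c d, g t := by
  have h1 : ∫⁻ x in {y : EuclideanSpace ℝ (Fin 2) | y 0 ∈ Ioo a b ∧ y 1 ∈ Ioo c d}, g (x 1)
      = ∫⁻ z in (univ.pi ![Ioo a b, Ioo c d] : Set (Fin 2 → ℝ)), g (z 1) := by
    rw [box_eq]
    exact (EuclideanSpace.volume_preserving_symm_measurableEquiv_toLp (Fin 2)).setLIntegral_comp_preimage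
      (measurableSet_pibox a b c d) (hg.comp (measurable_pi_apply 1))
  have h2 : ∫⁻ z in (univ.pi ![Ioo a b, Ioo c d] : Set (Fin 2 → ℝ)), g (z 1)
      = ∫⁻ w in Ioo a b ×ˢ Ioo c d, g w.2 := by
    rw [pibox_eq]
    exact (volume_preserving_finTwoArrow ℝ).setLIntegral_comp_preimage
      (measurableSet_Ioo.prod measurableSet_Ioo) (hg.comp measurable_snd)
  rw [h1, h2, MeasureTheory.Measure.volume_eq_prod, ← MeasureTheory.Measure.prod_restrict,
    lintegral_prod (fun w => g w.2) ((hg.comp measurable_snd).aemeasurable)]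
  simp only
  rw [lintegral_const]
  rw [Measure.restrict_apply MeasurableSet.univ, Set.univ_inter, Real.volume_Ioo, mul_comm]

lemma one_dim {q : ℝ} (hq : q < -1) :
    ∫⁻ t in Ioo (0:ℝ) (1/4), ENNReal.ofReal (t ^ q) = ⊤ := by
  by_contra h
  have hmeas : Measurable fun t : ℝ => t ^ q := by measurability
  have hint : IntegrableOn (fun t : ℝ => t ^ q) (Ioo (0:ℝ) (1/4)) := by
    constructor
    · exact hmeas.aestronglyMeasurable
    · rw [hasFiniteIntegral_iff_ofReal]
      · exact Ne.lt_top h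
      · filter_upwards [ae_restrict_mem measurableSet_Ioo] with t ht
        exact Real.rpow_nonneg ht.1.le q
  rw [intervalIntegral.integrableOn_Ioo_rpow_iff (by norm_num)] at hint
  linarith

lemma ff_div (p s : ℝ) (hp : 1 ≤ p) (hs0 : 0 < s) (hs1 : s < 1) (hsp : 1 < s * p) :
    (∫⁻ x in slitSquare, ∫⁻ y in slitSquare,
        ENNReal.ofReal (|ff x - ff y| ^ p / dist x y ^ ((2:ℝ) + s * p))) = ⊤ := by
  have hp0 : 0 < p := lt_of_lt_of_le one_pos hp
  set α := (2:ℝ) + s * p with hα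
  have hα0 : (0:ℝ) < α := by nlinarith
  have hAsub : {x : EuclideanSpace ℝ (Fin 2) | x 0 ∈ Ioo (1/2:ℝ) (3/4) ∧ x 1 ∈ Ioo (0:ℝ) (1/4)}
      ⊆ slitSquare := by
    rintro x ⟨h0, h1⟩
    refine ⟨⟨⟨by linarith [h0.1], by linarith [h0.2]⟩,
      ⟨by linarith [h1.1], by linarith [h1.2]⟩⟩, ?_⟩
    rintro ⟨-, hz⟩
    exact absurd hz (ne_of_gt h1.1)
  have key : ∀ x ∈ {x : EuclideanSpace ℝ (Fin 2) |
        x 0 ∈ Ioo (1/2:ℝ) (3/4) ∧ x 1 ∈ Ioo (0:ℝ) (1/4)},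
      ENNReal.ofReal ((3:ℝ)^(-α) * (x 1)^(-(s*p)))
        ≤ ∫⁻ y in slitSquare, ENNReal.ofReal (|ff x - ff y| ^ p / dist x y ^ α) := by
    intro x hx
    obtain ⟨hx0, hx1⟩ := hx
    have ht0 : 0 < x 1 := hx1.1
    have hBsub : {y : EuclideanSpace ℝ (Fin 2) |
          y 0 ∈ Ioo (x 0) (x 0 + x 1) ∧ y 1 ∈ Ioo (-(x 1)) 0} ⊆ slitSquare := by
      rintro y ⟨hy0, hy1⟩
      refine ⟨⟨⟨by linarith [hy0.1, hx0.1], by linarith [hy0.2, hx0.2, hx1.2]⟩,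
        ⟨by linarith [hy1.1, hx1.2], by linarith [hy1.2]⟩⟩, ?_⟩
      rintro ⟨-, hz⟩
      exact absurd hz (ne_of_lt hy1.2)
    have hb : ∀ y ∈ {y : EuclideanSpace ℝ (Fin 2) |
          y 0 ∈ Ioo (x 0) (x 0 + x 1) ∧ y 1 ∈ Ioo (-(x 1)) 0},
        ENNReal.ofReal (1 / (3 * x 1)^α)
          ≤ ENNReal.ofReal (|ff x - ff y| ^ p / dist x y ^ α) := by
      intro y hy
      obtain ⟨hy0, hy1⟩ := hy
      have hfx : ff x = 1 := by
        show (if 0 < x 1 then phi (x 0) else 0) = 1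
        rw [if_pos ht0]
        exact phi_one hx0.1.le
      have hfy : ff y = 0 := by
        show (if 0 < y 1 then phi (y 0) else 0) = 0
        rw [if_neg (not_lt.2 hy1.2.le)]
      have hxy : x ≠ y := by
        intro h
        rw [h] at ht0
        exact absurd hy1.2 (not_lt.2 ht0.le)
      have hdistpos : 0 < dist x y := dist_pos.2 hxy
      have hdist : dist x y ≤ 3 * x 1 := by
        rw [EuclideanSpace.dist_eq, Fin.sum_univ_two]
        simp only [Real.dist_eq, sq_abs]
        have h9 : (x 0 - y 0)^2 + (x 1 - y 1)^2 ≤ (3 * x 1)^2 := by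
          nlinarith [hy0.1, hy0.2, hy1.1, hy1.2, ht0]
        calc Real.sqrt ((x 0 - y 0)^2 + (x 1 - y 1)^2)
            ≤ Real.sqrt ((3 * x 1)^2) := Real.sqrt_le_sqrt h9
          _ = 3 * x 1 := Real.sqrt_sq (by linarith)
      rw [hfx, hfy, sub_zero, abs_one, Real.one_rpow]
      apply ENNReal.ofReal_le_ofReal
      exact one_div_le_one_div_of_le (Real.rpow_pos_of_pos hdistpos α)
        (Real.rpow_le_rpow dist_nonneg hdist hα0.le)
    calc ENNReal.ofReal ((3:ℝ)^(-α) * (x 1)^(-(s*p)))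
        = ENNReal.ofReal (1 / (3 * x 1)^α) * volume {y : EuclideanSpace ℝ (Fin 2) |
            y 0 ∈ Ioo (x 0) (x 0 + x 1) ∧ y 1 ∈ Ioo (-(x 1)) 0} := by
          rw [volume_box, show x 0 + x 1 - x 0 = x 1 by ring,
            show (0:ℝ) - -(x 1) = x 1 by ring,
            ← ENNReal.ofReal_mul (by positivity),
            ← ENNReal.ofReal_mul (by positivity)]
          congr 1
          have h3 : (3 * x 1)^α = 3^α * (x 1)^α := Real.mul_rpow (by norm_num) ht0.le
          have hα2 : (x 1)^α = (x 1 * x 1) * (x 1)^(s*p) := by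
            rw [hα, Real.rpow_add ht0,
              show ((2:ℝ)) = ((2:ℕ):ℝ) from by norm_num, Real.rpow_natCast]
            ring
          rw [Real.rpow_neg (by norm_num : (0:ℝ) ≤ 3), Real.rpow_neg ht0.le, h3, hα2]
          have h3p : (0:ℝ) < (3:ℝ)^α := Real.rpow_pos_of_pos (by norm_num) α
          have hxp : (0:ℝ) < (x 1)^(s*p) := Real.rpow_pos_of_pos ht0 _
          field_simp
      _ = ∫⁻ _ in {y : EuclideanSpace ℝ (Fin 2) |
            y 0 ∈ Ioo (x 0) (x 0 + x 1) ∧ y 1 ∈ Ioo (-(x 1)) 0},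
            ENNReal.ofReal (1 / (3 * x 1)^α) := by
          rw [setLIntegral_const, mul_comm]
      _ ≤ ∫⁻ y in {y : EuclideanSpace ℝ (Fin 2) |
            y 0 ∈ Ioo (x 0) (x 0 + x 1) ∧ y 1 ∈ Ioo (-(x 1)) 0},
            ENNReal.ofReal (|ff x - ff y| ^ p / dist x y ^ α) :=
          setLIntegral_mono' (measurableSet_box _ _ _ _) hb
      _ ≤ ∫⁻ y in slitSquare, ENNReal.ofReal (|ff x - ff y| ^ p / dist x y ^ α) :=
          lintegral_mono_set hBsub
  have hg : Measurable fun t : ℝ => ENNReal.ofReal ((3:ℝ)^(-α) * t^(-(s*p))) := by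
    measurability
  have houter : (∫⁻ x in {x : EuclideanSpace ℝ (Fin 2) |
        x 0 ∈ Ioo (1/2:ℝ) (3/4) ∧ x 1 ∈ Ioo (0:ℝ) (1/4)},
      ENNReal.ofReal ((3:ℝ)^(-α) * (x 1)^(-(s*p)))) = ⊤ := by
    rw [lintegral_box _ _ _ _ _ hg]
    have hdiv : ∫⁻ t in Ioo (0:ℝ) (1/4), ENNReal.ofReal ((3:ℝ)^(-α) * t^(-(s*p))) = ⊤ := by
      have hone := one_dim (q := -(s*p)) (by linarith)
      have hcongr : ∫⁻ t in Ioo (0:ℝ) (1/4), ENNReal.ofReal ((3:ℝ)^(-α) * t^(-(s*p)))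
          = ∫⁻ t in Ioo (0:ℝ) (1/4),
              ENNReal.ofReal ((3:ℝ)^(-α)) * ENNReal.ofReal (t^(-(s*p))) :=
        setLIntegral_congr_fun measurableSet_Ioo
          (fun t _ => ENNReal.ofReal_mul (by positivity))
      rw [hcongr, lintegral_const_mul' _ _ ENNReal.ofReal_ne_top, hone,
        ENNReal.mul_top (by simp only [ne_eq, ENNReal.ofReal_eq_zero, not_le]; positivity)]
    rw [hdiv, ENNReal.mul_top (by norm_num [ENNReal.ofReal_eq_zero])]
  refine eq_top_iff.2 ?_
  calc (⊤ : ℝ≥0∞) = _ := houter.symm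
    _ ≤ ∫⁻ x in {x : EuclideanSpace ℝ (Fin 2) |
          x 0 ∈ Ioo (1/2:ℝ) (3/4) ∧ x 1 ∈ Ioo (0:ℝ) (1/4)},
        ∫⁻ y in slitSquare, ENNReal.ofReal (|ff x - ff y| ^ p / dist x y ^ α) :=
        setLIntegral_mono' (measurableSet_box _ _ _ _) key
    _ ≤ ∫⁻ x in slitSquare,
        ∫⁻ y in slitSquare, ENNReal.ofReal (|ff x - ff y| ^ p / dist x y ^ α) :=
        lintegral_mono_set hAsub

end SlitSquareAux

/-- There is a function `f` on the slit square, differentiable with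
`‖f‖_∞ ≤ 1` and bounded gradient (hence in `W^{1,p}` for all `p`), equal to `1` on
`(1/2,1)×(0,1)` and to `0` on `(1/2,1)×(-1,0)`, such that for all `1 ≤ p < ∞` and
`s ∈ (0,1)` with `sp > 1`, the fractional seminorm
`∫_Ω ∫_Ω |f(x)-f(y)|^p/|x-y|^{2+sp} dy dx` is infinite; i.e. `f ∈ W^{1,p}(Ω)` but
`f ∉ W^{s,p}(Ω)` for `s > 1/p`. -/
theorem slit_square_W1p_not_Wsp :
    ∃ f : EuclideanSpace ℝ (Fin 2) → ℝ,
      (∀ x ∈ slitSquare, DifferentiableAt ℝ f x) ∧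
      (∀ x ∈ slitSquare, |f x| ≤ 1) ∧
      (∃ M : ℝ, ∀ x ∈ slitSquare, ‖fderiv ℝ f x‖ ≤ M) ∧
      (∀ x : EuclideanSpace ℝ (Fin 2),
        x 0 ∈ Set.Ioo (1 / 2 : ℝ) 1 → x 1 ∈ Set.Ioo (0 : ℝ) 1 → f x = 1) ∧
      (∀ x : EuclideanSpace ℝ (Fin 2),
        x 0 ∈ Set.Ioo (1 / 2 : ℝ) 1 → x 1 ∈ Set.Ioo (-1 : ℝ) 0 → f x = 0) ∧
      ∀ p s : ℝ, 1 ≤ p → 0 < s → s < 1 → 1 < s * p →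
        (∫⁻ x in slitSquare, ∫⁻ y in slitSquare,
            ENNReal.ofReal (|f x - f y| ^ p / dist x y ^ ((2 : ℝ) + s * p))) = ⊤ := by
  refine ⟨SlitSquareAux.ff, fun x hx => SlitSquareAux.ff_diff hx, ?_,
    SlitSquareAux.ff_fderiv_bound, ?_, ?_, fun p s hp hs0 hs1 hsp =>
      SlitSquareAux.ff_div p s hp hs0 hs1 hsp⟩
  · intro x _
    show |if 0 < x 1 then SlitSquareAux.phi (x 0) else 0| ≤ 1
    split
    · show |Real.smoothTransition (4 * x 0 - 1)| ≤ 1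
      rw [abs_of_nonneg (Real.smoothTransition.nonneg _)]
      exact Real.smoothTransition.le_one _
    · simp
  · intro x h0 h1
    show (if 0 < x 1 then SlitSquareAux.phi (x 0) else 0) = 1
    rw [if_pos h1.1]
    exact SlitSquareAux.phi_one h0.1.le
  · intro x h0 h1
    show (if 0 < x 1 then SlitSquareAux.phi (x 0) else 0) = 0
    rw [if_neg (not_lt.2 h1.2.le)]

end
end

section
/- Let Ω = (−1,1)² ∖ ((0,1)×{0}) ⊂ ℝ², let 1 ≤ p < ∞ and s ∈ (0,1) with sp > 1. If f : Ω → ℝ is any measurable function with f = 1 almost everywhere on (1/2,1)×(0,1) and f = 0 almost everywhere on (1/2,1)×(−1,0), then ∫_Ω ∫_Ω |f(x)−f(y)|^p / |x−y|^{2+sp} dy dx = ∞. -/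
open MeasureTheory ENNReal

noncomputable section

abbrev E : Type := EuclideanSpace ℝ (Fin 2)

def R (a b c d : ℝ) : Set E := {x : E | x 0 ∈ Set.Ioo a b ∧ x 1 ∈ Set.Ioo c d}

lemma measurableSet_R (a b c d : ℝ) : MeasurableSet (R a b c d) := by
  have h0 : Measurable fun x : E => x 0 := (measurable_pi_apply 0).comp (MeasurableEquiv.toLp 2 (Fin 2 → ℝ)).symm.measurable
  have h1 : Measurable fun x : E => x 1 := (measurable_pi_apply 1).comp (MeasurableEquiv.toLp 2 (Fin 2 → ℝ)).symm.measurable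
  exact (h0 measurableSet_Ioo).inter (h1 measurableSet_Ioo)

lemma volume_R (a b c d : ℝ) :
    volume (R a b c d) = ENNReal.ofReal (b - a) * ENNReal.ofReal (d - c) := by
  have hmp := EuclideanSpace.volume_preserving_symm_measurableEquiv_toLp (Fin 2)
  have hset : R a b c d = (MeasurableEquiv.toLp 2 (Fin 2 → ℝ)).symm ⁻¹'
      (Set.univ.pi ![Set.Ioo a b, Set.Ioo c d]) := by
    ext x
    simp [R, Set.mem_univ_pi, Fin.forall_fin_two]
  rw [hset, hmp.measure_preimage ((MeasurableSet.univ_pi (by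
    intro i; fin_cases i <;> exact measurableSet_Ioo)).nullMeasurableSet)]
  rw [volume_pi_pi]
  simp [Fin.prod_univ_two, Real.volume_Ioo]

lemma dist_le_sum (x y : E) : dist x y ≤ |x 0 - y 0| + |x 1 - y 1| := by
  rw [EuclideanSpace.dist_eq]
  have h : ∑ i, dist (x i) (y i) ^ 2 = (x 0 - y 0)^2 + (x 1 - y 1)^2 := by
    simp [Fin.sum_univ_two, Real.dist_eq, sq_abs]
  rw [h]
  have h0 := abs_nonneg (x 0 - y 0)
  have h1 := abs_nonneg (x 1 - y 1)
  have : (x 0 - y 0)^2 + (x 1 - y 1)^2 ≤ (|x 0 - y 0| + |x 1 - y 1|)^2 := by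
    nlinarith [sq_abs (x 0 - y 0), sq_abs (x 1 - y 1), mul_nonneg h0 h1]
  calc Real.sqrt ((x 0 - y 0)^2 + (x 1 - y 1)^2)
      ≤ Real.sqrt ((|x 0 - y 0| + |x 1 - y 1|)^2) := Real.sqrt_le_sqrt this
    _ = |x 0 - y 0| + |x 1 - y 1| := Real.sqrt_sq (by positivity)

lemma tendsto_aux (e : ℝ) (he : 3 < e) :
    Filter.Tendsto (fun n : ℕ => (2:ℝ)^n * ((2:ℝ)⁻¹^(n+1))^4 / (3 * (2:ℝ)⁻¹^(n+1))^e)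
      Filter.atTop Filter.atTop := by
  have hkey : ∀ n : ℕ, (2:ℝ)^n * ((2:ℝ)⁻¹^(n+1))^4 / (3 * (2:ℝ)⁻¹^(n+1))^e
      = (1/54) * ((3 * (2:ℝ)⁻¹^(n+1))⁻¹)^(e-3) := by
    intro n
    set w : ℝ := (2:ℝ)⁻¹^(n+1) with hw
    have hwpos : 0 < w := by positivity
    have htpos : (0:ℝ) < 3 * w := by positivity
    have h1 : (3*w)^e = (3*w)^(3:ℕ) * (3*w)^(e-3) := by
      rw [← Real.rpow_natCast (3*w) 3, ← Real.rpow_add htpos]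
      norm_num
    have h3 : ((3*w)⁻¹)^(e-3) = ((3*w)^(e-3))⁻¹ := Real.inv_rpow htpos.le _
    have h4 : ((3*w)^(e-3)) ≠ 0 := ne_of_gt (Real.rpow_pos_of_pos htpos _)
    have h2 : (2:ℝ)^n * w^4 = (1/2) * w^3 := by
      have ha : (2:ℝ)^n * w = 1/2 := by
        rw [hw, inv_pow, pow_succ]
        field_simp
      have : (2:ℝ)^n * w^4 = ((2:ℝ)^n * w) * w^3 := by ring
      rw [this, ha]
    rw [h1, h3, div_eq_iff (by positivity), h2]
    field_simp
    ring
  rw [funext hkey]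
  apply Filter.Tendsto.const_mul_atTop (by norm_num : (0:ℝ) < 1/54)
  apply (tendsto_rpow_atTop (by linarith : (0:ℝ) < e - 3)).comp
  have heq : ∀ n : ℕ, ((3:ℝ) * (2:ℝ)⁻¹^(n+1))⁻¹ = (2:ℝ)^(n+1) / 3 := by
    intro n
    rw [inv_pow]
    field_simp
  rw [funext heq]
  exact Filter.Tendsto.atTop_div_const (by norm_num)
    ((tendsto_pow_atTop_atTop_of_one_lt (by norm_num : (1:ℝ) < 2)).comp (Filter.tendsto_add_atTop_nat 1))


/-- For the slit square `Ω`, `1 ≤ p < ∞`, `s ∈ (0,1)` with `sp > 1`: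
any measurable `f` with `f = 1` a.e. on `(1/2,1)×(0,1)` and `f = 0` a.e. on
`(1/2,1)×(-1,0)` has infinite fractional seminorm
`∫_Ω ∫_Ω |f(x)-f(y)|^p/|x-y|^{2+sp} dy dx = ∞`. -/
theorem slit_square_seminorm_infinite
    (p s : ℝ) (hp : 1 ≤ p) (hs0 : 0 < s) (hs1 : s < 1) (hsp : 1 < s * p)
    (f : EuclideanSpace ℝ (Fin 2) → ℝ) (hf : Measurable f)
    (hone : ∀ᵐ x ∂(volume.restrict
      {x : EuclideanSpace ℝ (Fin 2) |
        x 0 ∈ Set.Ioo (1 / 2 : ℝ) 1 ∧ x 1 ∈ Set.Ioo (0 : ℝ) 1}), f x = 1)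
    (hzero : ∀ᵐ x ∂(volume.restrict
      {x : EuclideanSpace ℝ (Fin 2) |
        x 0 ∈ Set.Ioo (1 / 2 : ℝ) 1 ∧ x 1 ∈ Set.Ioo (-1 : ℝ) 0}), f x = 0) :
    (∫⁻ x in slitSquare, ∫⁻ y in slitSquare,
        ENNReal.ofReal (|f x - f y| ^ p / dist x y ^ ((2 : ℝ) + s * p))) = ⊤ := by
  set e : ℝ := (2 : ℝ) + s * p with he_def
  have he3 : 3 < e := by rw [he_def]; linarith
  set A : Set E := R (1/2) 1 0 1 with hA_def
  set B : Set E := R (1/2) 1 (-1) 0 with hB_def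
  have hone' : ∀ᵐ x ∂(volume.restrict A), f x = 1 := hone
  have hzero' : ∀ᵐ y ∂(volume.restrict B), f y = 0 := hzero
  have hAsub : A ⊆ slitSquare := by
    rintro x ⟨hx0, hx1⟩
    refine ⟨⟨⟨by linarith [hx0.1], hx0.2⟩, ⟨by linarith [hx1.1], hx1.2⟩⟩, ?_⟩
    intro h
    exact absurd h.2 (ne_of_gt hx1.1)
  have hBsub : B ⊆ slitSquare := by
    rintro x ⟨hx0, hx1⟩
    refine ⟨⟨⟨by linarith [hx0.1], hx0.2⟩, ⟨hx1.1, by linarith [hx1.2]⟩⟩, ?_⟩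
    intro h
    exact absurd h.2 (ne_of_lt hx1.2)
  -- step 1 : restrict to A × B
  have step1 : (∫⁻ x in A, ∫⁻ y in B,
      ENNReal.ofReal (|f x - f y| ^ p / dist x y ^ e))
      ≤ ∫⁻ x in slitSquare, ∫⁻ y in slitSquare,
        ENNReal.ofReal (|f x - f y| ^ p / dist x y ^ e) := by
    calc (∫⁻ x in A, ∫⁻ y in B, ENNReal.ofReal (|f x - f y| ^ p / dist x y ^ e))
        ≤ ∫⁻ x in slitSquare, ∫⁻ y in B,
            ENNReal.ofReal (|f x - f y| ^ p / dist x y ^ e) :=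
          lintegral_mono_set hAsub
      _ ≤ _ := lintegral_mono fun x => lintegral_mono_set hBsub
  -- step 2 : on A × B the integrand is 1 / dist ^ e
  have step2 : (∫⁻ x in A, ∫⁻ y in B, ENNReal.ofReal (1 / dist x y ^ e))
      = ∫⁻ x in A, ∫⁻ y in B, ENNReal.ofReal (|f x - f y| ^ p / dist x y ^ e) := by
    refine lintegral_congr_ae ?_
    filter_upwards [hone'] with x hx
    refine lintegral_congr_ae ?_
    filter_upwards [hzero'] with y hy
    rw [hx, hy, show |(1:ℝ) - 0| ^ p = 1 from by rw [sub_zero, abs_one, Real.one_rpow]]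
  -- the key lower bound for each n
  have key : ∀ n : ℕ,
      ENNReal.ofReal ((2:ℝ)^n * ((2:ℝ)⁻¹^(n+1))^4 / (3 * (2:ℝ)⁻¹^(n+1))^e)
      ≤ ∫⁻ x in slitSquare, ∫⁻ y in slitSquare,
          ENNReal.ofReal (|f x - f y| ^ p / dist x y ^ e) := by
    intro n
    set w : ℝ := (2:ℝ)⁻¹ ^ (n+1) with hw_def
    have hwpos : 0 < w := by positivity
    have hpow : (2:ℝ)^n * w = 1/2 := by
      rw [hw_def, inv_pow, pow_succ]
      field_simp
    have hw1 : w ≤ 1/2 := by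
      have h : ((2:ℝ)⁻¹)^(n+1) ≤ ((2:ℝ)⁻¹)^1 :=
        pow_le_pow_of_le_one (by norm_num) (by norm_num) (by omega)
      rw [hw_def]
      rw [pow_one] at h
      linarith [h]
    set ak : ℕ → ℝ := fun k => 1/2 + k * w with hak_def
    have hak1 : ∀ k : ℕ, ak (k+1) = ak k + w := by
      intro k; rw [hak_def]; push_cast; ring
    set Ak : ℕ → Set E := fun k => R (ak k) (ak (k+1)) 0 w with hAk_def
    set Bk : ℕ → Set E := fun k => R (ak k) (ak (k+1)) (-w) 0 with hBk_def
    have hakub : ∀ k : ℕ, k < 2^n → ak (k+1) ≤ 1 := by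
      intro k hk
      have hk' : (k:ℝ) + 1 ≤ 2^n := by
        have : (k+1 : ℕ) ≤ 2^n := hk
        exact_mod_cast this
      have := mul_le_mul_of_nonneg_right hk' hwpos.le
      rw [hak_def]
      push_cast
      nlinarith [hpow]
    have haklb : ∀ k : ℕ, 1/2 ≤ ak k := by
      intro k
      simp only [hak_def]
      have : (0:ℝ) ≤ k * w := by positivity
      linarith
    have hAkA : ∀ k : ℕ, k < 2^n → Ak k ⊆ A := by
      intro k hk x hx
      exact ⟨⟨lt_of_le_of_lt (haklb k) hx.1.1, lt_of_lt_of_le hx.1.2 (hakub k hk)⟩,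
        ⟨hx.2.1, lt_of_lt_of_le hx.2.2 (by linarith)⟩⟩
    have hBkB : ∀ k : ℕ, k < 2^n → Bk k ⊆ B := by
      intro k hk x hx
      exact ⟨⟨lt_of_le_of_lt (haklb k) hx.1.1, lt_of_lt_of_le hx.1.2 (hakub k hk)⟩,
        ⟨by linarith [hx.2.1], hx.2.2⟩⟩
    -- distance bounds
    have hdist : ∀ k : ℕ, ∀ x ∈ Ak k, ∀ y ∈ Bk k,
        0 < dist x y ∧ dist x y ≤ 3 * w := by
      intro k x hx y hy
      have hx0 := hx.1; have hx1 := hx.2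
      have hy0 := hy.1; have hy1 := hy.2
      have hak' := hak1 k
      constructor
      · refine dist_pos.2 ?_
        intro h
        rw [h] at hx1
        exact absurd (lt_trans hy1.2 hx1.1) (lt_irrefl _)
      · refine le_trans (dist_le_sum x y) ?_
        have h0 : |x 0 - y 0| ≤ w := by
          rw [abs_sub_le_iff]
          constructor <;> [linarith [hx0.2, hy0.1, hak']; linarith [hy0.2, hx0.1, hak']]
        have h1 : |x 1 - y 1| ≤ 2 * w := by
          rw [abs_sub_le_iff]
          constructor <;> [linarith [hx1.2, hy1.1]; linarith [hy1.2, hx1.1]]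
        linarith
    -- per-box constant
    set c : ℝ≥0∞ := ENNReal.ofReal (1 / (3*w)^e) with hc_def
    have hvolA : ∀ k : ℕ, volume (Ak k) = ENNReal.ofReal (w * w) := by
      intro k
      simp only [hAk_def]
      rw [volume_R, hak1 k]
      rw [show ak k + w - ak k = w by ring, sub_zero,
        ← ENNReal.ofReal_mul hwpos.le]
    have hvolB : ∀ k : ℕ, volume (Bk k) = ENNReal.ofReal (w * w) := by
      intro k
      simp only [hBk_def]
      rw [volume_R, hak1 k]
      rw [show ak k + w - ak k = w by ring, show (0:ℝ) - -w = w by ring,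
        ← ENNReal.ofReal_mul hwpos.le]
    -- per-box lower bound
    have boxbound : ∀ k ∈ Finset.range (2^n),
        (c * ENNReal.ofReal (w*w)) * ENNReal.ofReal (w*w)
        ≤ ∫⁻ x in Ak k, ∫⁻ y in B, ENNReal.ofReal (1 / dist x y ^ e) := by
      intro k hk
      rw [Finset.mem_range] at hk
      have inner : ∀ x ∈ Ak k,
          c * ENNReal.ofReal (w*w) ≤ ∫⁻ y in B, ENNReal.ofReal (1 / dist x y ^ e) := by
        intro x hx
        have h1 : c * ENNReal.ofReal (w*w) = ∫⁻ _ in Bk k, c := by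
          rw [setLIntegral_const, hvolB k]
        rw [h1]
        refine le_trans (lintegral_mono_ae ?_) (lintegral_mono_set (hBkB k hk))
        filter_upwards [ae_restrict_mem (measurableSet_R _ _ _ _)] with y hy
        have hd := hdist k x hx y hy
        rw [hc_def]
        apply ENNReal.ofReal_le_ofReal
        have hrle : dist x y ^ e ≤ (3*w) ^ e :=
          Real.rpow_le_rpow (hd.1.le) hd.2 (by linarith)
        exact one_div_le_one_div_of_le (Real.rpow_pos_of_pos hd.1 e) hrle
      calc (c * ENNReal.ofReal (w*w)) * ENNReal.ofReal (w*w)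
          = (c * ENNReal.ofReal (w*w)) * volume (Ak k) := by rw [hvolA k]
        _ = ∫⁻ _ in Ak k, (c * ENNReal.ofReal (w*w)) := (setLIntegral_const _ _).symm
        _ ≤ ∫⁻ x in Ak k, ∫⁻ y in B, ENNReal.ofReal (1 / dist x y ^ e) := by
            refine lintegral_mono_ae ?_
            filter_upwards [ae_restrict_mem (measurableSet_R _ _ _ _)] with x hx
            exact inner x hx
    -- disjointness of the Ak
    have hdisj : Set.PairwiseDisjoint (↑(Finset.range (2^n)) : Set ℕ) Ak := by
      have hmono : ∀ i j : ℕ, i < j → Disjoint (Ak i) (Ak j) := by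
        intro i j hij
        rw [Set.disjoint_left]
        intro x hxi hxj
        have h1 : x 0 < ak (i+1) := hxi.1.2
        have h2 : ak j < x 0 := hxj.1.1
        have h3 : (i:ℝ) + 1 ≤ j := by exact_mod_cast hij
        have h4 : ((i:ℝ)+1) * w ≤ (j:ℝ) * w := mul_le_mul_of_nonneg_right h3 hwpos.le
        have h5 : ak (i+1) ≤ ak j := by
          simp only [hak_def]; push_cast; linarith
        linarith
      intro i _ j _ hij
      rcases lt_or_gt_of_ne hij with h | h
      · exact hmono i j h
      · exact (hmono j i h).symm
    have hmeasAk : ∀ k ∈ Finset.range (2^n), MeasurableSet (Ak k) := by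
      intro k _; exact measurableSet_R _ _ _ _
    -- sum up
    have sumstep :
        ∑ _k ∈ Finset.range (2^n), ((c * ENNReal.ofReal (w*w)) * ENNReal.ofReal (w*w))
        ≤ ∫⁻ x in A, ∫⁻ y in B, ENNReal.ofReal (1 / dist x y ^ e) := by
      calc ∑ _k ∈ Finset.range (2^n), ((c * ENNReal.ofReal (w*w)) * ENNReal.ofReal (w*w))
          ≤ ∑ k ∈ Finset.range (2^n),
              ∫⁻ x in Ak k, ∫⁻ y in B, ENNReal.ofReal (1 / dist x y ^ e) :=
            Finset.sum_le_sum boxbound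
        _ = ∫⁻ x in ⋃ k ∈ Finset.range (2^n), Ak k,
              ∫⁻ y in B, ENNReal.ofReal (1 / dist x y ^ e) :=
            (lintegral_biUnion_finset hdisj hmeasAk _).symm
        _ ≤ ∫⁻ x in A, ∫⁻ y in B, ENNReal.ofReal (1 / dist x y ^ e) := by
            refine lintegral_mono_set ?_
            intro x hx
            simp only [Set.mem_iUnion] at hx
            obtain ⟨k, hk, hxk⟩ := hx
            exact hAkA k (Finset.mem_range.1 hk) hxk
    -- identify the sum with the ofReal expression
    have hid : ENNReal.ofReal ((2:ℝ)^n * w^4 / (3 * w)^e)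
        = ∑ _k ∈ Finset.range (2^n), ((c * ENNReal.ofReal (w*w)) * ENNReal.ofReal (w*w)) := by
      rw [Finset.sum_const, Finset.card_range, nsmul_eq_mul]
      rw [hc_def, ← ENNReal.ofReal_mul (by positivity), ← ENNReal.ofReal_mul (by positivity)]
      rw [show ((2^n : ℕ) : ℝ≥0∞) = ENNReal.ofReal ((2:ℝ)^n) by
        rw [ENNReal.ofReal_pow zero_le_two]; norm_num]
      rw [← ENNReal.ofReal_mul (by positivity)]
      congr 1
      ring
    calc ENNReal.ofReal ((2:ℝ)^n * w^4 / (3 * w)^e)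
        = ∑ _k ∈ Finset.range (2^n), ((c * ENNReal.ofReal (w*w)) * ENNReal.ofReal (w*w)) := hid
      _ ≤ ∫⁻ x in A, ∫⁻ y in B, ENNReal.ofReal (1 / dist x y ^ e) := sumstep
      _ = ∫⁻ x in A, ∫⁻ y in B, ENNReal.ofReal (|f x - f y| ^ p / dist x y ^ e) := step2
      _ ≤ _ := step1
  -- conclude via the divergence of the lower bounds
  rw [eq_top_iff]
  exact le_of_tendsto (ENNReal.tendsto_ofReal_atTop.comp (tendsto_aux e he3))
    (Filter.Eventually.of_forall key)

end
end

section
/- Let Ω = (−1,1)² ∖ ((0,1)×{0}) ⊂ ℝ², let 1 ≤ p < ∞ and 1/p < s < 1. Then (L^p(Ω), W^{1,p}(Ω))_{s,p} ≠ W^{s,p}(Ω): there exists f ∈ L^p(Ω) with ∫₀^∞ (ℓ^{-s} K(ℓ,f))^p dℓ/ℓ < ∞ but ∫_Ω ∫_Ω |f(x)−f(y)|^p / |x−y|^{2+sp} dy dx = ∞. -/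
open MeasureTheory ENNReal

noncomputable section

/-- The `L^p` "norm" on `Ω`, valued in `ℝ≥0∞`. -/
def lpNorm (p : ℝ) (Ω : Set (EuclideanSpace ℝ (Fin 2)))
    (f : EuclideanSpace ℝ (Fin 2) → ℝ) : ℝ≥0∞ :=
  (∫⁻ x in Ω, ENNReal.ofReal (|f x| ^ p)) ^ (1 / p)

/-- The `L^p` norm of the gradient on `Ω`, valued in `ℝ≥0∞`. -/
def gradLpNorm (p : ℝ) (Ω : Set (EuclideanSpace ℝ (Fin 2)))
    (h : EuclideanSpace ℝ (Fin 2) → ℝ) : ℝ≥0∞ :=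
  (∫⁻ x in Ω, ENNReal.ofReal (‖fderiv ℝ h x‖ ^ p)) ^ (1 / p)

/-- The `K`-functional for the couple `(L^p(Ω), W^{1,p}(Ω))`. -/
def Kfunc (p : ℝ) (Ω : Set (EuclideanSpace ℝ (Fin 2)))
    (f : EuclideanSpace ℝ (Fin 2) → ℝ) (ℓ : ℝ) : ℝ≥0∞ :=
  ⨅ (g : EuclideanSpace ℝ (Fin 2) → ℝ) (h : EuclideanSpace ℝ (Fin 2) → ℝ)
    (_ : ∀ x ∈ Ω, f x = g x + h x) (_ : ∀ x ∈ Ω, DifferentiableAt ℝ h x),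
      lpNorm p Ω g + ENNReal.ofReal ℓ * (lpNorm p Ω h + gradLpNorm p Ω h)

/-- The `p`-th power of the real interpolation seminorm. -/
def interpSeminormP (p s : ℝ) (Ω : Set (EuclideanSpace ℝ (Fin 2)))
    (f : EuclideanSpace ℝ (Fin 2) → ℝ) : ℝ≥0∞ :=
  ∫⁻ ℓ in Set.Ioi (0 : ℝ),
    (ENNReal.ofReal (ℓ ^ (-s)) * Kfunc p Ω f ℓ) ^ p * ENNReal.ofReal ℓ⁻¹


open Set

abbrev E2 := EuclideanSpace ℝ (Fin 2)

lemma coord_abs_le_norm (x : E2) (i : Fin 2) : |x i| ≤ ‖x‖ := by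
  rw [EuclideanSpace.norm_eq, ← Real.sqrt_sq_eq_abs]
  apply Real.sqrt_le_sqrt
  rw [Fin.sum_univ_two]
  fin_cases i <;> simp [Real.norm_eq_abs, sq_abs] <;> nlinarith [sq_nonneg (x 0), sq_nonneg (x 1)]

def ramp (t : ℝ) : ℝ := (max t 0)^2

lemma ramp_nonneg (t : ℝ) : 0 ≤ ramp t := sq_nonneg _

lemma ramp_le_sq (t : ℝ) : ramp t ≤ t^2 := by
  rcases le_or_gt t 0 with h|h
  · rw [ramp, max_eq_right h]; simpa using sq_nonneg t
  · simp [ramp, max_eq_left h.le]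

lemma ramp_hasDerivAt (t : ℝ) : HasDerivAt ramp (2 * max t 0) t := by
  rcases lt_trichotomy t 0 with h|h|h
  · have he : ramp =ᶠ[nhds t] fun _ => 0 := by
      filter_upwards [Iio_mem_nhds h] with y (hy : y < 0)
      simp [ramp, max_eq_right hy.le]
    rw [max_eq_right h.le, mul_zero]
    exact (hasDerivAt_const t (0:ℝ)).congr_of_eventuallyEq he
  · subst h
    rw [max_self, mul_zero]
    rw [hasDerivAt_iff_tendsto_slope]
    apply squeeze_zero_norm (fun y => ?_) ((continuous_abs.tendsto' 0 0 (by simp)).mono_left nhdsWithin_le_nhds)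
    rw [slope_def_field]
    simp only [ramp, max_self, sub_zero, ne_eq, zero_pow, OfNat.ofNat_ne_zero,
      not_false_eq_true]
    rcases eq_or_ne y 0 with rfl|hy
    · simp
    · rw [Real.norm_eq_abs, abs_div]
      rw [div_le_iff₀ (abs_pos.mpr hy)]
      have h1 : |(max y 0)^2| ≤ y^2 := by
        rw [abs_of_nonneg (sq_nonneg _)]; exact ramp_le_sq y
      calc |(max y 0)^2| ≤ y^2 := h1
        _ = |y| * |y| := by rw [← abs_mul, sq, abs_of_nonneg (mul_self_nonneg y)]
  · have he : ramp =ᶠ[nhds t] fun y => y^2 := by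
      filter_upwards [Ioi_mem_nhds h] with y (hy : 0 < y)
      simp [ramp, max_eq_left hy.le]
    rw [max_eq_left h.le]
    have h2 := hasDerivAt_pow 2 t
    norm_num at h2
    exact h2.congr_of_eventuallyEq he

def ff (x : E2) : ℝ := if 0 < x 1 then ramp (x 0) else 0

lemma ff_nonneg (x : E2) : 0 ≤ ff x := by
  unfold ff; split
  · exact ramp_nonneg _
  · exact le_rfl

lemma cont_coord (i : Fin 2) : Continuous fun x : E2 => x i :=
  (EuclideanSpace.proj i).continuous

lemma ff_hasFDerivAt {x : E2} (hx : x ∈ slitSquare) :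
    ∃ c : ℝ, |c| ≤ 2 ∧ HasFDerivAt ff (c • (EuclideanSpace.proj (0 : Fin 2) : E2 →L[ℝ] ℝ)) x := by
  obtain ⟨⟨hx0, hx1⟩, hxs⟩ := hx
  rcases lt_trichotomy (x 1) 0 with h|h|h
  · refine ⟨0, by norm_num, ?_⟩
    rw [zero_smul]
    have he : ff =ᶠ[nhds x] fun _ => 0 := by
      have : IsOpen {y : E2 | y 1 < 0} := isOpen_lt (cont_coord 1) continuous_const
      filter_upwards [this.mem_nhds h] with y (hy : y 1 < 0)
      simp [ff, not_lt.mpr hy.le, asymm hy]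
    exact (hasFDerivAt_const (0:ℝ) x).congr_of_eventuallyEq he
  · -- x 1 = 0, so x 0 ≤ 0
    have hx0le : x 0 ≤ 0 := by
      by_contra hpos
      push_neg at hpos
      exact hxs ⟨⟨hpos, hx0.2⟩, h⟩
    rcases lt_or_eq_of_le hx0le with h0|h0
    · refine ⟨0, by norm_num, ?_⟩
      rw [zero_smul]
      have he : ff =ᶠ[nhds x] fun _ => 0 := by
        have : IsOpen {y : E2 | y 0 < 0} := isOpen_lt (cont_coord 0) continuous_const
        filter_upwards [this.mem_nhds h0] with y (hy : y 0 < 0)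
        have : ramp (y 0) = 0 := by rw [ramp, max_eq_right hy.le]; simp
        simp [ff, this]
      exact (hasFDerivAt_const (0:ℝ) x).congr_of_eventuallyEq he
    · refine ⟨0, by norm_num, ?_⟩
      rw [zero_smul]
      rw [hasFDerivAt_iff_isLittleO_nhds_zero]
      rw [Asymptotics.isLittleO_iff]
      intro c hc
      filter_upwards [Metric.ball_mem_nhds (0 : E2) hc] with v hv
      rw [mem_ball_zero_iff] at hv
      have hffx : ff x = 0 := by simp [ff, h]
      have key : |ff (x + v)| ≤ ‖v‖ * ‖v‖ := by
        have h1 : |ff (x + v)| ≤ ramp ((x + v) 0) := by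
          rw [abs_of_nonneg (ff_nonneg _)]
          unfold ff; split
          · exact le_rfl
          · exact ramp_nonneg _
        have h2 : (x + v) 0 = v 0 := by
          have hxv : (x + v) 0 = x 0 + v 0 := rfl
          rw [hxv, h0, zero_add]
        calc |ff (x + v)| ≤ ramp ((x+v) 0) := h1
          _ ≤ ((x+v) 0)^2 := ramp_le_sq _
          _ = (v 0)^2 := by rw [h2]
          _ ≤ ‖v‖^2 := by
              rw [← sq_abs]
              exact pow_le_pow_left₀ (abs_nonneg _) (coord_abs_le_norm v 0) 2
          _ = ‖v‖ * ‖v‖ := sq ‖v‖ ▸ rfl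
      calc ‖ff (x + v) - ff x - (0 : E2 →L[ℝ] ℝ) v‖ = |ff (x+v)| := by
            rw [hffx]; simp [Real.norm_eq_abs]
        _ ≤ ‖v‖ * ‖v‖ := key
        _ ≤ c * ‖v‖ := mul_le_mul_of_nonneg_right hv.le (norm_nonneg v)
  · refine ⟨2 * max (x 0) 0, ?_, ?_⟩
    · rw [abs_of_nonneg (by positivity)]
      have : max (x 0) 0 ≤ 1 := max_le hx0.2.le zero_le_one
      linarith
    · have he : (fun y : E2 => ramp (y 0)) =ᶠ[nhds x] ff := by
        have : IsOpen {y : E2 | 0 < y 1} := isOpen_lt continuous_const (cont_coord 1)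
        filter_upwards [this.mem_nhds h] with y (hy : 0 < y 1)
        simp [ff, hy]
      have hcomp : HasFDerivAt (fun y : E2 => ramp (y 0))
          ((2 * max (x 0) 0) • (EuclideanSpace.proj (0 : Fin 2) : E2 →L[ℝ] ℝ)) x := by
        have hproj : HasFDerivAt (fun y : E2 => y 0)
            (EuclideanSpace.proj (0 : Fin 2) : E2 →L[ℝ] ℝ) x := by
          exact (EuclideanSpace.proj (0 : Fin 2) : E2 →L[ℝ] ℝ).hasFDerivAt
        exact (ramp_hasDerivAt (x 0)).comp_hasFDerivAt x hproj
      exact hcomp.congr_of_eventuallyEq he.symm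

lemma proj_norm_le : ‖(EuclideanSpace.proj (0 : Fin 2) : E2 →L[ℝ] ℝ)‖ ≤ 1 := by
  apply ContinuousLinearMap.opNorm_le_bound _ zero_le_one
  intro y
  rw [one_mul]
  simpa [Real.norm_eq_abs] using coord_abs_le_norm y 0

lemma ff_diff {x : E2} (hx : x ∈ slitSquare) : DifferentiableAt ℝ ff x :=
  (ff_hasFDerivAt hx).choose_spec.2.differentiableAt

set_option maxHeartbeats 800000 in
set_option synthInstance.maxHeartbeats 200000 in
lemma ff_fderiv_norm {x : E2} (hx : x ∈ slitSquare) : ‖fderiv ℝ ff x‖ ≤ 2 := by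
  obtain ⟨c, hc, hd⟩ := ff_hasFDerivAt hx
  rw [hd.fderiv]
  calc ‖c • (EuclideanSpace.proj (0 : Fin 2) : E2 →L[ℝ] ℝ)‖
      ≤ |c| * ‖(EuclideanSpace.proj (0 : Fin 2) : E2 →L[ℝ] ℝ)‖ := by
        simpa [Real.norm_eq_abs] using
          norm_smul_le c (EuclideanSpace.proj (0 : Fin 2) : E2 →L[ℝ] ℝ)
    _ ≤ 2 * 1 := mul_le_mul hc proj_norm_le (norm_nonneg _) (by norm_num)
    _ = 2 := by norm_num

lemma ff_le_one {x : E2} (hx : x ∈ slitSquare) : |ff x| ≤ 1 := by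
  obtain ⟨⟨hx0, _⟩, _⟩ := hx
  rw [abs_of_nonneg (ff_nonneg x)]
  unfold ff; split
  · have h1 : max (x 0) 0 ≤ 1 := max_le hx0.2.le zero_le_one
    have h2 : (0:ℝ) ≤ max (x 0) 0 := le_max_right _ _
    calc ramp (x 0) = (max (x 0) 0)^2 := rfl
      _ ≤ 1 := by nlinarith
  · exact zero_le_one

lemma measurable_coord (i : Fin 2) : Measurable fun x : E2 => x i := (cont_coord i).measurable

lemma ff_measurable : Measurable ff := by
  apply Measurable.ite
  · exact measurableSet_lt measurable_const (measurable_coord 1)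
  · have : Measurable fun x : E2 => max (x 0) 0 := (measurable_coord 0).max measurable_const
    exact this.pow_const 2
  · exact measurable_const

lemma slitSquare_measurable : MeasurableSet slitSquare := by
  apply MeasurableSet.diff
  · exact ((measurable_coord 0) measurableSet_Ioo).inter ((measurable_coord 1) measurableSet_Ioo)
  · exact ((measurable_coord 0) measurableSet_Ioo).inter ((measurable_coord 1) (measurableSet_singleton 0))

lemma slitSquare_vol_lt_top : volume slitSquare < ⊤ := by
  have hsub : slitSquare ⊆ Metric.closedBall (0 : E2) 2 := by
    intro x ⟨⟨hx0, hx1⟩, _⟩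
    rw [Metric.mem_closedBall, dist_zero_right, EuclideanSpace.norm_eq]
    rw [show ((2:ℝ)) = Real.sqrt 4 by rw [show (4:ℝ) = 2^2 by norm_num, Real.sqrt_sq]; norm_num]
    apply Real.sqrt_le_sqrt
    rw [Fin.sum_univ_two]
    have h0 : ‖x 0‖^2 ≤ 1 := by rw [Real.norm_eq_abs, sq_abs]; nlinarith [hx0.1, hx0.2]
    have h1 : ‖x 1‖^2 ≤ 1 := by rw [Real.norm_eq_abs, sq_abs]; nlinarith [hx1.1, hx1.2]
    linarith
  exact lt_of_le_of_lt (measure_mono hsub) (measure_closedBall_lt_top)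

variable {p : ℝ}

lemma lpNorm_zero_fun (hp : 0 < p) : lpNorm p slitSquare (fun _ => 0) = 0 := by
  rw [_root_.lpNorm]
  simp only [abs_zero, Real.zero_rpow hp.ne', ofReal_zero, lintegral_const, zero_mul]
  exact ENNReal.zero_rpow_of_pos (by positivity)

lemma gradLpNorm_zero_fun (hp : 0 < p) : gradLpNorm p slitSquare (fun _ => 0) = 0 := by
  rw [gradLpNorm]
  simp only [fderiv_const_apply, norm_zero, Real.zero_rpow hp.ne', ofReal_zero,
    lintegral_const, zero_mul]
  exact ENNReal.zero_rpow_of_pos (by positivity)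

lemma lpNorm_ff_lt_top (hp : 0 < p) : lpNorm p slitSquare ff < ⊤ := by
  have hb : ∫⁻ x in slitSquare, ENNReal.ofReal (|ff x| ^ p) ≤ 1 * volume slitSquare := by
    rw [← setLIntegral_const]
    apply setLIntegral_mono' slitSquare_measurable
    intro x hx
    apply ENNReal.ofReal_le_of_le_toReal
    simp only [ENNReal.toReal_one]
    exact Real.rpow_le_one (abs_nonneg _) (ff_le_one hx) hp.le
  rw [_root_.lpNorm]
  apply ENNReal.rpow_lt_top_of_nonneg (by positivity)
  exact ((hb.trans_lt (by rw [one_mul]; exact slitSquare_vol_lt_top))).ne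

lemma gradLpNorm_ff_lt_top (hp : 0 < p) : gradLpNorm p slitSquare ff < ⊤ := by
  have hb : ∫⁻ x in slitSquare, ENNReal.ofReal (‖fderiv ℝ ff x‖ ^ p)
      ≤ ENNReal.ofReal (2 ^ p) * volume slitSquare := by
    rw [← setLIntegral_const]
    apply setLIntegral_mono' slitSquare_measurable
    intro x hx
    apply ENNReal.ofReal_le_ofReal
    exact Real.rpow_le_rpow (norm_nonneg _) (ff_fderiv_norm hx) hp.le
  rw [gradLpNorm]
  apply ENNReal.rpow_lt_top_of_nonneg (by positivity)
  exact (hb.trans_lt (ENNReal.mul_lt_top ofReal_lt_top slitSquare_vol_lt_top)).ne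

lemma Kfunc_le_A (hp : 0 < p) (ℓ : ℝ) : Kfunc p slitSquare ff ℓ ≤ lpNorm p slitSquare ff := by
  have : Kfunc p slitSquare ff ℓ ≤ lpNorm p slitSquare ff
      + ENNReal.ofReal ℓ * (lpNorm p slitSquare (fun _ => 0)
        + gradLpNorm p slitSquare (fun _ => 0)) := by
    refine iInf_le_of_le ff (iInf_le_of_le (fun _ => 0) (iInf_le_of_le (fun x _ => by ring)
      (iInf_le_of_le (fun x _ => differentiableAt_const 0) le_rfl)))
  rwa [lpNorm_zero_fun hp, gradLpNorm_zero_fun hp, add_zero, mul_zero, add_zero] at this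

lemma Kfunc_le_B (hp : 0 < p) (ℓ : ℝ) : Kfunc p slitSquare ff ℓ
    ≤ ENNReal.ofReal ℓ * (lpNorm p slitSquare ff + gradLpNorm p slitSquare ff) := by
  have : Kfunc p slitSquare ff ℓ ≤ lpNorm p slitSquare (fun _ => 0)
      + ENNReal.ofReal ℓ * (lpNorm p slitSquare ff + gradLpNorm p slitSquare ff) := by
    refine iInf_le_of_le (fun _ => 0) (iInf_le_of_le ff (iInf_le_of_le (fun x _ => by ring)
      (iInf_le_of_le (fun x hx => ff_diff hx) le_rfl)))
  rwa [lpNorm_zero_fun hp, zero_add] at this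

-- generic: finiteness of ∫⁻ ofReal (t^a) over Ioc 0 1 (a > -1) and Ioi 1 (a < -1)
lemma lint_Ioc_rpow_lt_top {a : ℝ} (ha : -1 < a) :
    ∫⁻ t in Ioc (0:ℝ) 1, ENNReal.ofReal (t ^ a) < ⊤ := by
  have hsub : Ioc (0:ℝ) 1 ⊆ Ioo (0:ℝ) 2 := fun t ht => ⟨ht.1, lt_of_le_of_lt ht.2 one_lt_two⟩
  refine lt_of_le_of_lt (lintegral_mono_set hsub) ?_
  have hint : IntegrableOn (fun t : ℝ => t ^ a) (Ioo (0:ℝ) 2) :=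
    (intervalIntegral.integrableOn_Ioo_rpow_iff two_pos).mpr ha
  have hnn : 0 ≤ᵐ[volume.restrict (Ioo (0:ℝ) 2)] fun t : ℝ => t ^ a := by
    filter_upwards [ae_restrict_mem measurableSet_Ioo] with t ht
    exact Real.rpow_nonneg ht.1.le a
  exact (hasFiniteIntegral_iff_ofReal hnn).mp hint.2

lemma lint_Ioi_rpow_lt_top {a : ℝ} (ha : a < -1) :
    ∫⁻ t in Ioi (1:ℝ), ENNReal.ofReal (t ^ a) < ⊤ := by
  have hint : IntegrableOn (fun t : ℝ => t ^ a) (Ioi (1:ℝ)) :=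
    (integrableOn_Ioi_rpow_iff one_pos).mpr ha
  have hnn : 0 ≤ᵐ[volume.restrict (Ioi (1:ℝ))] fun t : ℝ => t ^ a := by
    filter_upwards [ae_restrict_mem measurableSet_Ioi] with t ht
    exact Real.rpow_nonneg (zero_lt_one.trans ht).le a
  exact (hasFiniteIntegral_iff_ofReal hnn).mp hint.2

lemma rpow_helper {ℓ : ℝ} (hℓ : 0 < ℓ) (A : ℝ≥0∞) (a q : ℝ) (hq : 0 ≤ q) :
    (ENNReal.ofReal (ℓ ^ a) * A) ^ q * ENNReal.ofReal ℓ⁻¹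
      = A ^ q * ENNReal.ofReal (ℓ ^ (a * q - 1)) := by
  have h1 : (ℓ ^ a) ^ q = ℓ ^ (a * q) := (Real.rpow_mul hℓ.le a q).symm
  have h2 : ℓ ^ (a * q) * ℓ⁻¹ = ℓ ^ (a * q - 1) := by
    rw [← Real.rpow_neg_one ℓ, ← Real.rpow_add hℓ]
    ring_nf
  rw [ENNReal.mul_rpow_of_nonneg _ _ hq,
    ENNReal.ofReal_rpow_of_pos (Real.rpow_pos_of_pos hℓ _), h1,
    mul_right_comm, ← ENNReal.ofReal_mul (Real.rpow_nonneg hℓ.le _), h2,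
    mul_comm (ENNReal.ofReal _)]

lemma interp_lt_top {p s : ℝ} (hp : 1 ≤ p) (hs0 : 1 / p < s) (hs1 : s < 1) :
    interpSeminormP p s slitSquare ff < ⊤ := by
  have hp0 : 0 < p := lt_of_lt_of_le one_pos hp
  have hs0' : 0 < s := lt_trans (by positivity) hs0
  set Nf := lpNorm p slitSquare ff with hNf
  set D := lpNorm p slitSquare ff + gradLpNorm p slitSquare ff with hD
  have hNft : Nf ≠ ⊤ := (lpNorm_ff_lt_top hp0).ne
  have hDt : D ≠ ⊤ := (ENNReal.add_lt_top.mpr ⟨lpNorm_ff_lt_top hp0, gradLpNorm_ff_lt_top hp0⟩).ne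
  have hDpt : D ^ p ≠ ⊤ := (ENNReal.rpow_lt_top_of_nonneg hp0.le hDt).ne
  have hNfpt : Nf ^ p ≠ ⊤ := (ENNReal.rpow_lt_top_of_nonneg hp0.le hNft).ne
  rw [interpSeminormP, ← Ioc_union_Ioi_eq_Ioi (zero_le_one' ℝ), lintegral_union measurableSet_Ioi
    (Ioc_disjoint_Ioi le_rfl)]
  apply ENNReal.add_lt_top.mpr
  constructor
  · have hb : ∫⁻ ℓ in Ioc (0:ℝ) 1, (ENNReal.ofReal (ℓ ^ (-s)) * Kfunc p slitSquare ff ℓ) ^ p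
        * ENNReal.ofReal ℓ⁻¹
        ≤ ∫⁻ ℓ in Ioc (0:ℝ) 1, D ^ p * ENNReal.ofReal (ℓ ^ ((1-s)*p - 1)) := by
      apply setLIntegral_mono' measurableSet_Ioc
      intro ℓ hℓ
      have hℓ0 : 0 < ℓ := hℓ.1
      have step1 : (ENNReal.ofReal (ℓ ^ (-s)) * Kfunc p slitSquare ff ℓ) ^ p
          * ENNReal.ofReal ℓ⁻¹
          ≤ (ENNReal.ofReal (ℓ ^ (1-s)) * D) ^ p * ENNReal.ofReal ℓ⁻¹ := by
        apply mul_le_mul_left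
        apply ENNReal.rpow_le_rpow _ hp0.le
        calc ENNReal.ofReal (ℓ ^ (-s)) * Kfunc p slitSquare ff ℓ
            ≤ ENNReal.ofReal (ℓ ^ (-s)) * (ENNReal.ofReal ℓ * D) :=
              mul_le_mul_right (Kfunc_le_B hp0 ℓ) _
          _ = ENNReal.ofReal (ℓ ^ (1-s)) * D := by
              rw [← mul_assoc, ← ENNReal.ofReal_mul (Real.rpow_nonneg hℓ0.le _)]
              congr 2
              nth_rewrite 2 [← Real.rpow_one ℓ]
              rw [← Real.rpow_add hℓ0]
              ring_nf
      refine step1.trans_eq ?_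
      rw [rpow_helper hℓ0 D (1-s) p hp0.le]
    refine lt_of_le_of_lt hb ?_
    rw [lintegral_const_mul' _ _ hDpt]
    apply ENNReal.mul_lt_top (lt_top_iff_ne_top.mpr hDpt)
    apply lint_Ioc_rpow_lt_top
    have : 0 < (1 - s) * p := mul_pos (by linarith) hp0
    linarith
  · have hb : ∫⁻ ℓ in Ioi (1:ℝ), (ENNReal.ofReal (ℓ ^ (-s)) * Kfunc p slitSquare ff ℓ) ^ p
        * ENNReal.ofReal ℓ⁻¹
        ≤ ∫⁻ ℓ in Ioi (1:ℝ), Nf ^ p * ENNReal.ofReal (ℓ ^ (-s*p - 1)) := by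
      apply setLIntegral_mono' measurableSet_Ioi
      intro ℓ hℓ
      have hℓ0 : 0 < ℓ := zero_lt_one.trans hℓ
      have step1 : (ENNReal.ofReal (ℓ ^ (-s)) * Kfunc p slitSquare ff ℓ) ^ p
          * ENNReal.ofReal ℓ⁻¹
          ≤ (ENNReal.ofReal (ℓ ^ (-s)) * Nf) ^ p * ENNReal.ofReal ℓ⁻¹ := by
        apply mul_le_mul_left
        exact ENNReal.rpow_le_rpow (mul_le_mul_right (Kfunc_le_A hp0 ℓ) _) hp0.le
      refine step1.trans_eq ?_
      rw [rpow_helper hℓ0 Nf (-s) p hp0.le]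
    refine lt_of_le_of_lt hb ?_
    rw [lintegral_const_mul' _ _ hNfpt]
    apply ENNReal.mul_lt_top (lt_top_iff_ne_top.mpr hNfpt)
    apply lint_Ioi_rpow_lt_top
    nlinarith

lemma box_eq_preimage (A B : Set ℝ) :
    {y : E2 | y 0 ∈ A ∧ y 1 ∈ B}
      = ((MeasurableEquiv.toLp 2 (Fin 2 → ℝ)).symm) ⁻¹'
          ((MeasurableEquiv.finTwoArrow : (Fin 2 → ℝ) ≃ᵐ ℝ × ℝ) ⁻¹' (A ×ˢ B)) := by
  ext y
  simp [MeasurableEquiv.finTwoArrow, finTwoArrowEquiv]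

lemma volume_box (A B : Set ℝ) (hA : MeasurableSet A) (hB : MeasurableSet B) :
    volume {y : E2 | y 0 ∈ A ∧ y 1 ∈ B} = volume A * volume B := by
  rw [box_eq_preimage]
  rw [(EuclideanSpace.volume_preserving_symm_measurableEquiv_toLp (Fin 2)).measure_preimage
    ((MeasurableEquiv.finTwoArrow.measurable (hA.prod hB)).nullMeasurableSet)]
  rw [(volume_preserving_finTwoArrow ℝ).measure_preimage ((hA.prod hB).nullMeasurableSet)]
  rw [show (volume : Measure (ℝ × ℝ)) = (volume : Measure ℝ).prod volume from rfl]
  exact Measure.prod_prod A B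

lemma lintegral_box (A B : Set ℝ) (hA : MeasurableSet A) (hB : MeasurableSet B)
    (G : ℝ → ℝ≥0∞) (hG : Measurable G) :
    ∫⁻ x in {y : E2 | y 0 ∈ A ∧ y 1 ∈ B}, G (x 1)
      = (∫⁻ t in B, G t) * volume A := by
  rw [box_eq_preimage]
  calc ∫⁻ x in ((MeasurableEquiv.toLp 2 (Fin 2 → ℝ)).symm) ⁻¹'
        ((MeasurableEquiv.finTwoArrow : (Fin 2 → ℝ) ≃ᵐ ℝ × ℝ) ⁻¹' (A ×ˢ B)), G (x 1)
      = ∫⁻ z in (MeasurableEquiv.finTwoArrow : (Fin 2 → ℝ) ≃ᵐ ℝ × ℝ) ⁻¹' (A ×ˢ B), G (z 1) :=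
        (EuclideanSpace.volume_preserving_symm_measurableEquiv_toLp (Fin 2)).setLIntegral_comp_preimage_emb
          ((MeasurableEquiv.toLp 2 (Fin 2 → ℝ)).symm).measurableEmbedding
          (fun z : Fin 2 → ℝ => G (z 1)) _
    _ = ∫⁻ w in A ×ˢ B, G w.2 :=
        (volume_preserving_finTwoArrow ℝ).setLIntegral_comp_preimage_emb
          (MeasurableEquiv.finTwoArrow : (Fin 2 → ℝ) ≃ᵐ ℝ × ℝ).measurableEmbedding
          (fun w : ℝ × ℝ => G w.2) _
    _ = (∫⁻ t in B, G t) * volume A := by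
        rw [show ((volume : Measure (ℝ × ℝ)).restrict (A ×ˢ B))
            = ((volume : Measure ℝ).restrict A).prod ((volume : Measure ℝ).restrict B) from
          (Measure.prod_restrict A B).symm]
        rw [lintegral_prod (fun w => G w.2) (hG.comp measurable_snd).aemeasurable]
        simp [lintegral_const, Measure.restrict_apply_univ]

section Diverge
variable {p s : ℝ}

lemma oneD_div (hsp : 1 < s * p) {c : ℝ} (hc : 0 < c) :
    ∫⁻ t in Ioo (0:ℝ) (1/8), ENNReal.ofReal (c * t ^ (-(s*p))) = ⊤ := by
  by_contra hfin
  have hfin' : ∫⁻ t in Ioo (0:ℝ) (1/8), ENNReal.ofReal (c * t ^ (-(s*p))) < ⊤ :=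
    lt_top_iff_ne_top.mpr hfin
  have hnn : 0 ≤ᵐ[volume.restrict (Ioo (0:ℝ) (1/8))] fun t : ℝ => c * t ^ (-(s*p)) := by
    filter_upwards [ae_restrict_mem measurableSet_Ioo] with t ht
    exact mul_nonneg hc.le (Real.rpow_nonneg ht.1.le _)
  have hmeas : Measurable fun t : ℝ => c * t ^ (-(s*p)) :=
    (measurable_id.pow_const _).const_mul c
  have hint : IntegrableOn (fun t : ℝ => c * t ^ (-(s*p))) (Ioo (0:ℝ) (1/8)) :=
    ⟨hmeas.aestronglyMeasurable, (hasFiniteIntegral_iff_ofReal hnn).mpr hfin'⟩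
  have hint2 : IntegrableOn (fun t : ℝ => t ^ (-(s*p))) (Ioo (0:ℝ) (1/8)) := by
    have h2 := hint.smul (c⁻¹)
    have heq : (c⁻¹ • fun t : ℝ => c * t ^ (-(s*p))) = fun t : ℝ => t ^ (-(s*p)) := by
      funext t
      simp [smul_eq_mul, ← mul_assoc, inv_mul_cancel₀ hc.ne']
    rwa [heq] at h2
  rw [intervalIntegral.integrableOn_Ioo_rpow_iff (by norm_num : (0:ℝ) < 1/8)] at hint2
  linarith

lemma S_lower (hp0 : 0 < p) (hsp : 1 < s * p) :
    (∫⁻ x in {y : E2 | y 0 ∈ Ioo (1/2:ℝ) (5/8) ∧ y 1 ∈ Ioo (0:ℝ) (1/8)},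
      ENNReal.ofReal ((1/4:ℝ)^p * (3:ℝ)^(-(2+s*p)) * (x 1) ^ (-(s*p)))) = ⊤ := by
  have hc : 0 < (1/4:ℝ)^p * (3:ℝ)^(-(2+s*p)) :=
    mul_pos (Real.rpow_pos_of_pos (by norm_num) _) (Real.rpow_pos_of_pos (by norm_num) _)
  rw [lintegral_box _ _ measurableSet_Ioo measurableSet_Ioo
    (fun t => ENNReal.ofReal ((1/4:ℝ)^p * (3:ℝ)^(-(2+s*p)) * t ^ (-(s*p))))
    (ENNReal.measurable_ofReal.comp ((measurable_id.pow_const _).const_mul _))]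
  rw [oneD_div hsp hc]
  rw [ENNReal.top_mul]
  rw [Real.volume_Ioo]
  simp only [ne_eq, ENNReal.ofReal_eq_zero, not_le]
  norm_num

lemma inner_bound (hp : 1 ≤ p) (hs0 : 0 < s) (hsp : 0 < s * p)
    {x : E2} (hx : x 0 ∈ Ioo (1/2:ℝ) (5/8) ∧ x 1 ∈ Ioo (0:ℝ) (1/8)) :
    ENNReal.ofReal ((1/4:ℝ)^p * (3:ℝ)^(-(2+s*p)) * (x 1) ^ (-(s*p)))
      ≤ ∫⁻ y in slitSquare,
          ENNReal.ofReal (|ff x - ff y| ^ p / dist x y ^ ((2:ℝ) + s * p)) := by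
  obtain ⟨ha, ht⟩ := hx
  set a := x 0 with haa
  set t := x 1 with htt'
  have ht0 : 0 < t := ht.1
  have hexp : (0:ℝ) ≤ 2 + s * p := by linarith
  set Bx : Set E2 := {y : E2 | y 0 ∈ Ioo a (a+t) ∧ y 1 ∈ Ioo (-t) 0} with hBx
  have hBmeas : MeasurableSet Bx :=
    ((measurable_coord 0) measurableSet_Ioo).inter ((measurable_coord 1) measurableSet_Ioo)
  have hBsub : Bx ⊆ slitSquare := by
    rintro y ⟨hy0, hy1⟩
    have h1 : (1/2:ℝ) < y 0 := lt_trans ha.1 hy0.1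
    have h2 : y 0 < 3/4 := by
      calc y 0 < a + t := hy0.2
        _ < 5/8 + 1/8 := by exact add_lt_add ha.2 ht.2
        _ = 3/4 := by norm_num
    exact ⟨⟨⟨by linarith, by linarith⟩, ⟨by linarith [hy1.1, ht.2], by linarith [hy1.2]⟩⟩,
      fun hmem => absurd hmem.2 (ne_of_lt hy1.2)⟩
  have hpt : ∀ y ∈ Bx, ENNReal.ofReal ((1/4:ℝ)^p / (3*t)^(2+s*p))
      ≤ ENNReal.ofReal (|ff x - ff y| ^ p / dist x y ^ ((2:ℝ) + s * p)) := by
    rintro y ⟨hy0, hy1⟩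
    apply ENNReal.ofReal_le_ofReal
    have hffy : ff y = 0 := by
      simp only [ff, if_neg (not_lt.mpr hy1.2.le)]
    have hffx : ff x = a^2 := by
      show (if 0 < t then ramp a else 0) = a^2
      rw [if_pos ht0, ramp, max_eq_left (by linarith [ha.1] : (0:ℝ) ≤ a)]
    have hnum : (1/4:ℝ)^p ≤ |ff x - ff y| ^ p := by
      apply Real.rpow_le_rpow (by norm_num) _ (by linarith)
      rw [hffx, hffy, sub_zero, abs_of_nonneg (sq_nonneg a)]
      nlinarith [ha.1]
    have hd0 : dist x y ≤ 3 * t := by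
      rw [EuclideanSpace.dist_eq]
      rw [show (3*t) = Real.sqrt ((3*t)^2) from (Real.sqrt_sq (by positivity)).symm]
      apply Real.sqrt_le_sqrt
      rw [Fin.sum_univ_two]
      have e0 : dist (x 0) (y 0) ^ 2 ≤ t^2 := by
        rw [Real.dist_eq, sq_abs]
        have := hy0.1; have := hy0.2
        nlinarith
      have e1 : dist (x 1) (y 1) ^ 2 ≤ (2*t)^2 := by
        rw [Real.dist_eq, sq_abs]
        have := hy1.1; have := hy1.2
        nlinarith
      nlinarith
    have hxney : x ≠ y := by
      intro h
      have : x 1 = y 1 := by rw [h]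
      have hlt : y 1 < x 1 := lt_trans hy1.2 ht0
      exact absurd this (ne_of_gt hlt)
    have hdpos : 0 < dist x y := dist_pos.mpr hxney
    have hdenpos : 0 < dist x y ^ ((2:ℝ) + s*p) := Real.rpow_pos_of_pos hdpos _
    have hden : dist x y ^ ((2:ℝ) + s*p) ≤ (3*t)^(2+s*p) :=
      Real.rpow_le_rpow dist_nonneg hd0 hexp
    exact div_le_div₀ (Real.rpow_nonneg (abs_nonneg _) _) hnum hdenpos hden
  have hre : (1/4:ℝ)^p / (3*t)^(2+s*p) * (t*t)
      = (1/4:ℝ)^p * (3:ℝ)^(-(2+s*p)) * t ^ (-(s*p)) := by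
    rw [Real.mul_rpow (by norm_num : (0:ℝ) ≤ 3) ht0.le]
    rw [div_eq_mul_inv, mul_inv, ← Real.rpow_neg (by norm_num : (0:ℝ) ≤ 3),
      ← Real.rpow_neg ht0.le]
    have htt2 : t * t = t ^ (2:ℝ) := by
      rw [show (2:ℝ) = ((2:ℕ):ℝ) by norm_num, Real.rpow_natCast, sq]
    rw [htt2, ← mul_assoc, mul_assoc, ← Real.rpow_add ht0]
    ring_nf
  calc ENNReal.ofReal ((1/4:ℝ)^p * (3:ℝ)^(-(2+s*p)) * t ^ (-(s*p)))
      = ENNReal.ofReal ((1/4:ℝ)^p / (3*t)^(2+s*p)) * (ENNReal.ofReal t * ENNReal.ofReal t) := by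
        rw [← ENNReal.ofReal_mul ht0.le, ← ENNReal.ofReal_mul (by positivity), hre]
    _ = ENNReal.ofReal ((1/4:ℝ)^p / (3*t)^(2+s*p)) * volume Bx := by
        rw [hBx, volume_box _ _ measurableSet_Ioo measurableSet_Ioo,
          Real.volume_Ioo, Real.volume_Ioo]
        norm_num
    _ = ∫⁻ _ in Bx, ENNReal.ofReal ((1/4:ℝ)^p / (3*t)^(2+s*p)) := (setLIntegral_const _ _).symm
    _ ≤ ∫⁻ y in Bx, ENNReal.ofReal (|ff x - ff y| ^ p / dist x y ^ ((2:ℝ) + s * p)) :=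
        setLIntegral_mono' hBmeas hpt
    _ ≤ ∫⁻ y in slitSquare, ENNReal.ofReal (|ff x - ff y| ^ p / dist x y ^ ((2:ℝ) + s * p)) :=
        lintegral_mono_set hBsub

lemma slitSquare_measurable' : MeasurableSet slitSquare := by
  apply MeasurableSet.diff
  · exact ((measurable_coord 0) measurableSet_Ioo).inter ((measurable_coord 1) measurableSet_Ioo)
  · exact ((measurable_coord 0) measurableSet_Ioo).inter
      ((measurable_coord 1) (measurableSet_singleton 0))

lemma div_top (hp : 1 ≤ p) (hs0 : 0 < s) (hsp : 1 < s * p) :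
    (∫⁻ x in slitSquare, ∫⁻ y in slitSquare,
        ENNReal.ofReal (|ff x - ff y| ^ p / dist x y ^ ((2:ℝ) + s * p))) = ⊤ := by
  have hp0 : 0 < p := lt_of_lt_of_le one_pos hp
  have hsp0 : 0 < s * p := lt_trans one_pos hsp
  set S : Set E2 := {y : E2 | y 0 ∈ Ioo (1/2:ℝ) (5/8) ∧ y 1 ∈ Ioo (0:ℝ) (1/8)} with hS
  have hSmeas : MeasurableSet S :=
    ((measurable_coord 0) measurableSet_Ioo).inter ((measurable_coord 1) measurableSet_Ioo)
  have hSsub : S ⊆ slitSquare := by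
    rintro y ⟨hy0, hy1⟩
    exact ⟨⟨⟨by linarith [hy0.1], by linarith [hy0.2]⟩, ⟨by linarith [hy1.1], by linarith [hy1.2]⟩⟩,
      fun hmem => absurd hmem.2 (ne_of_gt hy1.1)⟩
  rw [← top_le_iff]
  calc (⊤ : ℝ≥0∞)
      = ∫⁻ x in S, ENNReal.ofReal ((1/4:ℝ)^p * (3:ℝ)^(-(2+s*p)) * (x 1) ^ (-(s*p))) :=
        (S_lower hp0 hsp).symm
    _ ≤ ∫⁻ x in S, ∫⁻ y in slitSquare,
          ENNReal.ofReal (|ff x - ff y| ^ p / dist x y ^ ((2:ℝ) + s * p)) :=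
        setLIntegral_mono' hSmeas (fun x hx => inner_bound hp hs0 hsp0 hx)
    _ ≤ ∫⁻ x in slitSquare, ∫⁻ y in slitSquare,
          ENNReal.ofReal (|ff x - ff y| ^ p / dist x y ^ ((2:ℝ) + s * p)) :=
        lintegral_mono_set hSsub

end Diverge

/-- For the slit square `Ω`, `1 ≤ p < ∞` and `1/p < s < 1`, the interpolation
space differs from `W^{s,p}(Ω)`: there is `f ∈ L^p(Ω)` with
`∫₀^∞ (ℓ^{-s}K(ℓ,f))^p dℓ/ℓ < ∞` but `∫_Ω ∫_Ω |f(x)-f(y)|^p/|x-y|^{2+sp} dy dx = ∞`. -/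
theorem slit_square_interp_ne_Wsp
    (p s : ℝ) (hp : 1 ≤ p) (hs0 : 1 / p < s) (hs1 : s < 1) :
    ∃ f : EuclideanSpace ℝ (Fin 2) → ℝ,
      MemLp f (ENNReal.ofReal p) (volume.restrict slitSquare) ∧
      interpSeminormP p s slitSquare f < ⊤ ∧
      (∫⁻ x in slitSquare, ∫⁻ y in slitSquare,
          ENNReal.ofReal (|f x - f y| ^ p / dist x y ^ ((2 : ℝ) + s * p))) = ⊤ := by
  have hp0 : 0 < p := lt_of_lt_of_le one_pos hp
  have hs0' : 0 < s := lt_trans (by positivity) hs0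
  have hsp : 1 < s * p := by
    have := (div_lt_iff₀ hp0).mp hs0
    linarith
  refine ⟨ff, ?_, interp_lt_top hp hs0 hs1, div_top hp hs0' hsp⟩
  have : IsFiniteMeasure (volume.restrict slitSquare) :=
    ⟨by rw [Measure.restrict_apply_univ]; exact slitSquare_vol_lt_top⟩
  apply MemLp.of_bound ff_measurable.aestronglyMeasurable 1
  rw [ae_restrict_iff' slitSquare_measurable]
  exact Filter.Eventually.of_forall (fun x hx => by rw [Real.norm_eq_abs]; exact ff_le_one hx)

end
end
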